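/- Let α ∈ (0,1), let A ∈ ℝ^{d×d} be invertible, and let d ∈ ℝ^d be nonzero. Define q := A⁻¹ d, s := ‖q‖² > 0, β := (√(α + (1−α)s) − √α)/s, and K := √α I + β q qᵀ. Then A K Kᵀ Aᵀ = α A Aᵀ + (1−α) d dᵀ. -/

import Mathlib

open Matrix

lemma aux_vmv_mul_vmv {n : ℕ} (q : Fin n → ℝ) :
    vecMulVec q q * vecMulVec q q = (q ⬝ᵥ q) • vecMulVec q q := by
  ext i j
  simp [mul_apply, vecMulVec_apply, dotProduct, Finset.sum_mul, Finset.mul_sum]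
  apply Finset.sum_congr rfl
  intro k _
  ring

lemma aux_conj_vmv {n : ℕ} (A : Matrix (Fin n) (Fin n) ℝ) (q : Fin n → ℝ) :
    A * vecMulVec q q * Aᵀ = vecMulVec (A *ᵥ q) (A *ᵥ q) := by
  ext i j
  simp only [mul_apply, vecMulVec_apply, mulVec, dotProduct, transpose_apply]
  rw [Finset.sum_mul_sum, Finset.sum_comm]
  apply Finset.sum_congr rfl
  intro k _
  rw [Finset.sum_mul]
  apply Finset.sum_congr rfl
  intro l _
  ring

/-- One-step factorized QNG update: with `q := A⁻¹ d`, `s := ‖q‖²`,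
`β := (√(α + (1−α)s) − √α)/s` and `K := √α I + β q qᵀ`, we have
`A K Kᵀ Aᵀ = α A Aᵀ + (1−α) d dᵀ`. -/
theorem qng_factorized_update (n : ℕ) (α : ℝ) (hα₀ : 0 < α) (hα₁ : α < 1)
    (A : Matrix (Fin n) (Fin n) ℝ) (hA : IsUnit A)
    (d : Fin n → ℝ) (hd : d ≠ 0)
    (q : Fin n → ℝ) (hq : q = A⁻¹ *ᵥ d)
    (s : ℝ) (hs : s = q ⬝ᵥ q) (hspos : 0 < s)
    (β : ℝ) (hβ : β = (Real.sqrt (α + (1 - α) * s) - Real.sqrt α) / s)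
    (K : Matrix (Fin n) (Fin n) ℝ)
    (hK : K = Real.sqrt α • (1 : Matrix (Fin n) (Fin n) ℝ) + β • Matrix.vecMulVec q q) :
    A * K * Kᵀ * Aᵀ = α • (A * Aᵀ) + (1 - α) • Matrix.vecMulVec d d := by
  have hAq : A *ᵥ q = d := by
    rw [hq, mulVec_mulVec, Matrix.mul_nonsing_inv A (Matrix.isUnit_iff_isUnit_det A |>.mp hA),
      one_mulVec]
  -- scalar identity
  have hβs : β * s = Real.sqrt (α + (1 - α) * s) - Real.sqrt α := by
    rw [hβ, div_mul_cancel₀ _ hspos.ne']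
  have hc : 2 * Real.sqrt α * β + β ^ 2 * s = 1 - α := by
    have h1 : (Real.sqrt α + β * s) ^ 2 = α + (1 - α) * s := by
      rw [hβs]
      have : Real.sqrt α + (Real.sqrt (α + (1 - α) * s) - Real.sqrt α)
          = Real.sqrt (α + (1 - α) * s) := by ring
      rw [this, Real.sq_sqrt]
      nlinarith [hα₀.le, hspos.le]
    have hsq : Real.sqrt α ^ 2 = α := Real.sq_sqrt hα₀.le
    have h2 : (2 * Real.sqrt α * β + β ^ 2 * s) * s = (1 - α) * s := by nlinarith
    have := mul_right_cancel₀ hspos.ne' h2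
    exact this
  have hKT : Kᵀ = K := by
    rw [hK]; simp [transpose_add, transpose_smul, vecMulVec_eq (ι := Fin 1)]
  have hKK : K * Kᵀ = α • (1 : Matrix (Fin n) (Fin n) ℝ) + (1 - α) • vecMulVec q q := by
    rw [hKT, hK]
    rw [add_mul, mul_add, mul_add]
    rw [smul_mul_smul_comm, smul_mul_smul_comm, smul_mul_smul_comm, smul_mul_smul_comm]
    rw [aux_vmv_mul_vmv, smul_smul, one_mul, mul_one, Matrix.one_mul,
      Real.mul_self_sqrt hα₀.le, ← hs]
    rw [← hc]
    module
  calc A * K * Kᵀ * Aᵀ = A * (K * Kᵀ) * Aᵀ := by rw [Matrix.mul_assoc A K Kᵀ]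
    _ = α • (A * Aᵀ) + (1 - α) • vecMulVec d d := by
        rw [hKK]
        rw [Matrix.mul_add, Matrix.add_mul, Matrix.mul_smul, Matrix.mul_smul,
          Matrix.smul_mul, Matrix.smul_mul, Matrix.mul_one, aux_conj_vmv, hAq]
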